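/- In cylindrical coordinates (r,θ,z) on ℝ³, let τ = 1 + (r−1)/(L−1) for r ∈ [1,L] and k = L−1. Given a vector field v̄ = v̄_τ e_τ + v̄_θ e_θ + v̄_z e_z on {(τ,θ,z) : 1 < τ < 2, 0 < z < 1}, define v_r = (kτ/r)v̄_τ(τ,θ,z), v_θ = v̄_θ(τ,θ,z), v_z = (τ/r)v̄_z(τ,θ,z). Then div v = (τ/r)·div v̄. -/

import Mathlib

/-- Divergence in cylindrical coordinates of a field with components (wr, wθ, wz):
div v = r⁻¹v_r + ∂_r v_r + r⁻¹∂_θ v_θ + ∂_z v_z. -/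
noncomputable def cdiv (wr wθ wz : ℝ × ℝ × ℝ → ℝ) (r θ z : ℝ) : ℝ :=
  wr (r, θ, z) / r + deriv (fun s => wr (s, θ, z)) r
    + (1 / r) * deriv (fun s => wθ (r, s, z)) θ
    + deriv (fun s => wz (r, θ, s)) z

/-- with τ(r) = 1 + (r−1)/(L−1), k = L−1, and v defined from v̄ by
v_r = (kτ/r)v̄_τ, v_θ = v̄_θ, v_z = (τ/r)v̄_z, one has div v = (τ/r)·div v̄. -/
theorem stmt14 (L : ℝ) (hL : 1 < L)
    (k : ℝ) (hk : k = L - 1)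
    (τ : ℝ → ℝ) (hτ : τ = fun s => 1 + (s - 1) / (L - 1))
    (vτ vθ vz : ℝ × ℝ × ℝ → ℝ)
    (h1 : ContDiff ℝ 1 vτ) (h2 : ContDiff ℝ 1 vθ) (h3 : ContDiff ℝ 1 vz)
    (r θ z : ℝ) (hr : r ∈ Set.Ioo (1 : ℝ) L) (hz : z ∈ Set.Ioo (0 : ℝ) 1) :
    cdiv (fun p => (k * τ p.1 / p.1) * vτ (τ p.1, p.2.1, p.2.2))
        (fun p => vθ (τ p.1, p.2.1, p.2.2))
        (fun p => (τ p.1 / p.1) * vz (τ p.1, p.2.1, p.2.2)) r θ z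
      = (τ r / r) * cdiv vτ vθ vz (τ r) θ z := by
  have hL1 : L - 1 ≠ 0 := by linarith [hr.1, hr.2]
  have hr0 : r ≠ 0 := by nlinarith [hr.1]
  have hτr1 : (1:ℝ) < τ r := by
    rw [hτ]; simp only
    have : 0 < (r - 1) / (L - 1) := div_pos (by linarith [hr.1]) (by linarith)
    linarith
  have hτ0 : τ r ≠ 0 := by linarith
  -- derivative of τ
  have hτd : ∀ s : ℝ, HasDerivAt τ (1 / (L - 1)) s := by
    intro s
    rw [hτ]
    simpa using (((hasDerivAt_id s).sub_const 1).div_const (L - 1)).const_add 1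
  set a := fderiv ℝ vτ (τ r, θ, z) (1, 0, 0) with ha
  set b := fderiv ℝ vθ (τ r, θ, z) (0, 1, 0) with hb
  set c := fderiv ℝ vz (τ r, θ, z) (0, 0, 1) with hc
  have hvτf := (h1.differentiable one_ne_zero (τ r, θ, z)).hasFDerivAt
  have hvθf := (h2.differentiable one_ne_zero (τ r, θ, z)).hasFDerivAt
  have hvzf := (h3.differentiable one_ne_zero (τ r, θ, z)).hasFDerivAt
  -- inner curves
  have hcurve1 : HasDerivAt (fun s : ℝ => ((s, θ, z) : ℝ × ℝ × ℝ)) (1, 0, 0) (τ r) :=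
    HasDerivAt.prodMk (hasDerivAt_id (τ r)) (hasDerivAt_const _ _)
  have hcurve1' : HasDerivAt (fun s : ℝ => ((τ s, θ, z) : ℝ × ℝ × ℝ)) (1 / (L - 1), 0, 0) r :=
    HasDerivAt.prodMk (hτd r) (hasDerivAt_const _ _)
  have hcurve2 : HasDerivAt (fun s : ℝ => ((τ r, s, z) : ℝ × ℝ × ℝ)) (0, 1, 0) θ :=
    HasDerivAt.prodMk (hasDerivAt_const _ _) (HasDerivAt.prodMk (hasDerivAt_id θ) (hasDerivAt_const _ _))
  have hcurve3 : HasDerivAt (fun s : ℝ => ((τ r, θ, s) : ℝ × ℝ × ℝ)) (0, 0, 1) z :=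
    HasDerivAt.prodMk (hasDerivAt_const _ _) (HasDerivAt.prodMk (hasDerivAt_const _ _) (hasDerivAt_id z))
  have hA : HasDerivAt (fun s => vτ (s, θ, z)) a (τ r) := hvτf.comp_hasDerivAt _ hcurve1
  have hB : HasDerivAt (fun s => vθ (τ r, s, z)) b θ := hvθf.comp_hasDerivAt _ hcurve2
  have hC : HasDerivAt (fun s => vz (τ r, θ, s)) c z := hvzf.comp_hasDerivAt _ hcurve3
  have hA' : HasDerivAt (fun s => vτ (τ s, θ, z)) ((1 / (L - 1)) * a) r := by
    have := hvτf.comp_hasDerivAt _ hcurve1'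
    have heq : fderiv ℝ vτ (τ r, θ, z) (1 / (L - 1), 0, 0) = (1 / (L - 1)) * a := by
      have : ((1 / (L - 1), 0, 0) : ℝ × ℝ × ℝ) = (1 / (L - 1)) • (1, 0, 0) := by
        simp [Prod.smul_def]
      rw [this, ContinuousLinearMap.map_smul, smul_eq_mul, ha]
    rwa [heq] at this
  -- wr and its derivative
  have hcoef : HasDerivAt (fun s => k * τ s / s)
      ((k * (1 / (L - 1)) * r - k * τ r * 1) / r ^ 2) r :=
    ((hτd r).const_mul k).div (hasDerivAt_id r) hr0
  have hwr : HasDerivAt (fun s => (k * τ s / s) * vτ (τ s, θ, z))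
      (((k * (1 / (L - 1)) * r - k * τ r * 1) / r ^ 2) * vτ (τ r, θ, z)
        + (k * τ r / r) * ((1 / (L - 1)) * a)) r := hcoef.mul hA'
  have hwz : HasDerivAt (fun s => (τ r / r) * vz (τ r, θ, s)) ((τ r / r) * c) z :=
    hC.const_mul _
  rw [cdiv, cdiv]
  simp only
  rw [hwr.deriv, hB.deriv, hwz.deriv, hA.deriv, hC.deriv]
  rw [hk]
  field_simp
  ring
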